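/- Let p ≠ 2, 5 be a prime with p ≡ 2 or 3 (mod 5). Then there is no Fibonacci sequence in F_p with all terms nonzero whose minimal period divides p − 1. -/

import Mathlib

open Polynomial

/-- For a prime `p ≠ 2, 5` with `p ≡ 2, 3 (mod 5)`, there is no Fibonacci sequence over
`F_p` with all terms nonzero whose minimal period divides `p - 1`. -/
theorem no_fib_min_period_dvd_of_inert (p : ℕ) [Fact p.Prime] (hp2 : p ≠ 2) (hp5 : p ≠ 5)
    (h5 : p % 5 = 2 ∨ p % 5 = 3) :
    ¬∃ a : ℕ → ZMod p, (∀ n, a (n + 2) = a (n + 1) + a n) ∧ (∀ n, a n ≠ 0) ∧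
      ∃ m : ℕ, IsLeast {k : ℕ | 1 ≤ k ∧ ∀ n, a (n + k) = a n} m ∧ m ∣ p - 1 := by
  rintro ⟨a, hrec, hnz, m, ⟨⟨hm1, hper⟩, -⟩, hdvd⟩
  have hp : p.Prime := Fact.out
  have hpodd : Odd p := hp.odd_of_ne_two hp2
  -- 5 is not a square mod p
  have hns2 : ¬ IsSquare (2 : ZMod 5) := by decide
  have hns3 : ¬ IsSquare (3 : ZMod 5) := by decide
  haveI : Fact (Nat.Prime 5) := ⟨by norm_num⟩
  have h5sq : ¬ IsSquare (5 : ZMod p) := by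
    intro hs
    have h := (ZMod.exists_sq_eq_prime_iff_of_mod_four_eq_one (p := 5) (q := p)
      (by norm_num) hp2).mpr (by exact_mod_cast hs)
    rw [show ((p : ℕ) : ZMod 5) = ((p % 5 : ℕ) : ZMod 5) by rw [ZMod.natCast_mod]] at h
    rcases h5 with h' | h' <;> rw [h'] at h
    · exact hns2 (by exact_mod_cast h)
    · exact hns3 (by exact_mod_cast h)
  have hnoroot : ∀ r : ZMod p, r * r ≠ r + 1 := by
    intro r hr
    exact h5sq ⟨2 * r - 1, by linear_combination -4 * hr⟩
  -- the quadratic X^2 - X - 1 is irreducible over ZMod p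
  set q : (ZMod p)[X] := X ^ 2 - X - 1 with hqdef
  have hdeg : q.natDegree = 2 := by unfold q; compute_degree!
  have hq0 : q ≠ 0 := fun h => by simp [h] at hdeg
  have hirr : Irreducible q := by
    rw [irreducible_iff_roots_eq_zero_of_degree_le_three (by rw [hdeg]) (by rw [hdeg]; norm_num)]
    by_contra h
    obtain ⟨r, hr⟩ := Multiset.exists_mem_of_ne_zero h
    have hroot := (mem_roots hq0).1 hr
    have : r * r = r + 1 := by
      have := hroot
      simp only [hqdef, IsRoot, eval_sub, eval_pow, eval_X, eval_one] at this
      linear_combination this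
    exact hnoroot r this
  haveI : Fact (Irreducible q) := ⟨hirr⟩
  set R := AdjoinRoot q with hR
  set α : R := AdjoinRoot.root q with hαdef
  set φ : ZMod p →+* R := (AdjoinRoot.of q) with hφdef
  have hφinj : Function.Injective φ := φ.injective
  have hα : α ^ 2 = α + 1 := by
    have := AdjoinRoot.eval₂_root q
    simp only [hqdef, eval₂_sub, eval₂_pow, eval₂_X, eval₂_one] at this
    linear_combination this
  -- the auxiliary geometric sequence
  set u : ℕ → R := fun n => φ (a (n + 1)) - (1 - α) * φ (a n) with hu
  have hstep : ∀ n, u (n + 1) = α * u n := by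
    intro n
    simp only [hu]
    rw [hrec n, map_add]
    linear_combination (-(φ (a n))) * hα
  have hu0 : u 0 ≠ 0 := by
    intro h
    simp only [hu, Nat.zero_add] at h
    have h0 : φ (a 0) ≠ 0 := fun hz => hnz 0 (hφinj (by simpa using hz))
    have ha0 : (a 0 : ZMod p) ≠ 0 := hnz 0
    set r : ZMod p := 1 - a 1 * (a 0)⁻¹ with hrdef
    have hαr : α * φ (a 0) = φ r * φ (a 0) := by
      rw [← map_mul]
      have : r * a 0 = a 0 - a 1 := by rw [hrdef, sub_mul, one_mul, mul_assoc, inv_mul_cancel₀ ha0, mul_one]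
      rw [this, map_sub]
      linear_combination h
    have hαr' : α = φ r := mul_right_cancel₀ h0 hαr
    have : r * r = r + 1 := by
      apply hφinj
      rw [map_mul, map_add, map_one, ← hαr']
      linear_combination hα
    exact hnoroot r this
  have hun : ∀ n, u n = α ^ n * u 0 := by
    intro n
    induction n with
    | zero => simp
    | succ k ih => rw [hstep k, ih, pow_succ]; ring
  -- α has order dividing m, hence dividing p - 1
  have hαm : α ^ m = 1 := by
    have hum : u m = u 0 := by
      simp only [hu]
      rw [show m + 1 = 1 + m by ring, hper 1, show m = 0 + m from (zero_add m).symm, hper 0]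
    have := hun m
    rw [hum] at this
    have h1 : (α ^ m - 1) * u 0 = 0 := by linear_combination -this
    rcases mul_eq_zero.1 h1 with h2 | h2
    · exact sub_eq_zero.1 h2
    · exact absurd h2 hu0
  have hαp1 : α ^ (p - 1) = 1 := by
    obtain ⟨k, hk⟩ := hdvd
    rw [hk, pow_mul, hαm, one_pow]
  have hαp : α ^ p = α := by
    have h' : α ^ (p - 1 + 1) = α := by rw [pow_succ, hαp1, one_mul]
    rwa [show p - 1 + 1 = p by omega] at h'
  -- the element t with t^2 = 5
  set t : R := 2 * α - 1 with htdef
  have ht2 : t ^ 2 = φ 5 := by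
    rw [show φ (5 : ZMod p) = (5 : R) from map_ofNat φ 5]
    simp only [htdef]
    linear_combination 4 * hα
  have h5ne : (5 : ZMod p) ≠ 0 := by
    have : ¬ (p ∣ 5) := fun hdvd5 => hp5 ((Nat.prime_dvd_prime_iff_eq hp (by norm_num)).1 hdvd5)
    intro h
    exact this ((ZMod.natCast_eq_zero_iff _ _).1 (by exact_mod_cast h))
  have ht0 : t ≠ 0 := by
    intro h
    rw [h] at ht2
    simp only [zero_pow, ne_eq, OfNat.ofNat_ne_zero, not_false_eq_true] at ht2
    exact h5ne (hφinj (by rw [← ht2, map_zero]))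
  -- Frobenius: t ^ p = t
  haveI hcharZ : CharP (ZMod p) p := inferInstance
  haveI hchar : CharP R p := charP_of_injective_algebraMap
    (algebraMap (ZMod p) R).injective p
  haveI : ExpChar R p := ExpChar.prime hp
  have htp : t ^ p = t := by
    have h2p : (2 : R) ^ p = 2 := by
      have : ((2 : ZMod p)) ^ p = 2 := ZMod.pow_card 2
      calc (2 : R) ^ p = φ ((2 : ZMod p) ^ p) := by rw [map_pow, map_ofNat]
        _ = φ 2 := by rw [this]
        _ = 2 := map_ofNat φ 2
    calc t ^ p = (2 * α + (-1)) ^ p := by rw [htdef, sub_eq_add_neg]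
      _ = (2 * α) ^ p + (-1 : R) ^ p := by rw [add_pow_char (2 * α) (-1 : R)]
      _ = 2 ^ p * α ^ p + (-1 : R) ^ p := by rw [mul_pow]
      _ = 2 * α + (-1) := by rw [h2p, hαp, hpodd.neg_one_pow]
      _ = t := by rw [htdef, sub_eq_add_neg]
  have htp1 : t ^ (p - 1) = 1 := by
    have : t ^ (p - 1) * t = 1 * t := by
      rw [one_mul, ← pow_succ, show (p - 1) + 1 = p by omega, htp]
    exact mul_right_cancel₀ ht0 this
  -- Euler's criterion gives that 5 is a square: contradiction
  apply h5sq
  rw [ZMod.euler_criterion p h5ne]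
  obtain ⟨j, hj⟩ := hpodd
  have hexp : 2 * (p / 2) = p - 1 := by omega
  have : φ ((5 : ZMod p) ^ (p / 2)) = φ 1 := by
    rw [map_pow, map_one, ← ht2, ← pow_mul, hexp, htp1]
  exact hφinj this
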